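/- For every K ≥ 1, α ∈ [1,2], t ∈ [0,1] with t < 1, and integer m ≥ 1, the equation t·f_α(r^m) + (2K(1-t)/(K+1))·f_α(r) = 1/(2α) has a unique solution r in (0,1), where f_α(r) = (1/(2α))(((1+r)/(1-r))^α - 1). -/
import Mathlib


/-- For `K ≥ 1`, `α ∈ [1,2]`, `t ∈ [0,1)`, `m ≥ 1`, the equation
`t f_α(r^m) + (2K(1-t)/(K+1)) f_α(r) = 1/(2α)` has a unique solution in `(0,1)`. -/
theorem stmt15 (K α t : ℝ) (hK : 1 ≤ K) (hα : α ∈ Set.Icc (1:ℝ) 2)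
    (ht0 : 0 ≤ t) (ht1 : t < 1) (m : ℕ) (hm : 1 ≤ m)
    (f : ℝ → ℝ) (hf : ∀ r, f r = (1 / (2 * α)) * (((1 + r) / (1 - r)) ^ α - 1)) :
    ∃! r : ℝ, r ∈ Set.Ioo (0:ℝ) 1 ∧
      t * f (r ^ m) + (2 * K * (1 - t) / (K + 1)) * f r = 1 / (2 * α) := by
  obtain ⟨hα1, hα2⟩ := hα
  have hαpos : (0:ℝ) < α := lt_of_lt_of_le one_pos hα1
  have hTpos : (0:ℝ) < 1 / (2 * α) := by positivity
  set c : ℝ := 2 * K * (1 - t) / (K + 1) with hcdef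
  have hc : 0 < c := by
    apply div_pos
    · nlinarith
    · linarith
  -- basic facts about the base (1+r)/(1-r)
  have hbase : ∀ r : ℝ, 0 ≤ r → r < 1 → 1 ≤ (1 + r) / (1 - r) := by
    intro r h0 h1
    rw [le_div_iff₀ (by linarith)]
    linarith
  have hf0 : ∀ r : ℝ, 0 ≤ r → r < 1 → 0 ≤ f r := by
    intro r h0 h1
    rw [hf]
    have h1' : (1:ℝ) ≤ ((1 + r) / (1 - r)) ^ α := by
      calc (1:ℝ) = 1 ^ α := (Real.one_rpow α).symm
      _ ≤ _ := Real.rpow_le_rpow zero_le_one (hbase r h0 h1) hαpos.le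
    nlinarith
  have hbasemono : ∀ a b : ℝ, 0 ≤ a → a ≤ b → b < 1 →
      (1 + a) / (1 - a) ≤ (1 + b) / (1 - b) := by
    intro a b h0 hab h1
    rw [div_le_div_iff₀ (by linarith) (by linarith)]
    nlinarith
  have hbasestrict : ∀ a b : ℝ, 0 ≤ a → a < b → b < 1 →
      (1 + a) / (1 - a) < (1 + b) / (1 - b) := by
    intro a b h0 hab h1
    rw [div_lt_div_iff₀ (by linarith) (by linarith)]
    nlinarith
  have hfmono : ∀ a b : ℝ, 0 ≤ a → a ≤ b → b < 1 → f a ≤ f b := by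
    intro a b h0 hab h1
    rw [hf, hf]
    have := Real.rpow_le_rpow (by linarith [hbase a h0 (lt_of_le_of_lt hab h1)])
      (hbasemono a b h0 hab h1) hαpos.le
    nlinarith
  have hfstrict : ∀ a b : ℝ, 0 ≤ a → a < b → b < 1 → f a < f b := by
    intro a b h0 hab h1
    rw [hf, hf]
    have := Real.rpow_lt_rpow (by linarith [hbase a h0 (lt_trans hab h1)])
      (hbasestrict a b h0 hab h1) hαpos
    nlinarith
  set g : ℝ → ℝ := fun r => t * f (r ^ m) + c * f r with hgdef
  have hg0 : g 0 = 0 := by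
    have hm' : (0:ℝ) ^ m = 0 := zero_pow (by omega)
    have hf00 : f 0 = 0 := by
      rw [hf]; norm_num [Real.one_rpow]
    simp [hgdef, hm', hf00]
  -- strict monotonicity of g on [0,1)
  have hgstrict : ∀ a b : ℝ, 0 ≤ a → a < b → b < 1 → g a < g b := by
    intro a b h0 hab h1
    have hbm : b ^ m < 1 := pow_lt_one₀ (by linarith) h1 (by omega)
    have h1' : t * f (a ^ m) ≤ t * f (b ^ m) := by
      apply mul_le_mul_of_nonneg_left _ ht0
      exact hfmono _ _ (pow_nonneg h0 m) (pow_le_pow_left₀ h0 hab.le m) hbm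
    have h2' : c * f a < c * f b :=
      mul_lt_mul_of_pos_left (hfstrict a b h0 hab h1) hc
    simpa [hgdef] using add_lt_add_of_le_of_lt h1' h2'
  -- the point r0 with g r0 ≥ 1/(2α)
  obtain ⟨M, hMdef⟩ : ∃ M : ℝ, M = 1 + 1 / c := ⟨_, rfl⟩
  have hM1 : (1:ℝ) < M := by
    have : 0 < 1 / c := by positivity
    rw [hMdef]; linarith
  obtain ⟨r0, hr0def⟩ : ∃ r0 : ℝ, r0 = (M - 1) / (M + 1) := ⟨_, rfl⟩
  have hr0pos : 0 < r0 := by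
    rw [hr0def]; exact div_pos (by linarith) (by linarith)
  have hr01 : r0 < 1 := by
    rw [hr0def, div_lt_one (by linarith)]; linarith
  have hratio : (1 + r0) / (1 - r0) = M := by
    rw [hr0def]
    have hM1' : M + 1 ≠ 0 := by linarith
    field_simp
    ring
  have hgr0 : 1 / (2 * α) ≤ g r0 := by
    have hMα : M ≤ M ^ α := by
      calc M = M ^ (1:ℝ) := (Real.rpow_one M).symm
      _ ≤ M ^ α := Real.rpow_le_rpow_of_exponent_le hM1.le hα1
    have hfr0 : 1 / (2 * α) / c ≤ f r0 := by
      rw [hf, hratio]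
      have h2 : 1 / c ≤ M ^ α - 1 := by
        have := hMdef; linarith
      calc 1 / (2 * α) / c = 1 / (2 * α) * (1 / c) := by ring
      _ ≤ 1 / (2 * α) * (M ^ α - 1) := mul_le_mul_of_nonneg_left h2 hTpos.le
    have ht' : 0 ≤ t * f (r0 ^ m) :=
      mul_nonneg ht0 (hf0 _ (pow_nonneg hr0pos.le m)
        (pow_lt_one₀ hr0pos.le hr01 (by omega)))
    have hc' : 1 / (2 * α) ≤ c * f r0 := by
      calc 1 / (2 * α) = c * (1 / (2 * α) / c) := by field_simp
      _ ≤ c * f r0 := mul_le_mul_of_nonneg_left hfr0 hc.le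
    simp only [hgdef]
    linarith
  -- continuity of g on [0, r0]
  have hcont : ContinuousOn g (Set.Icc 0 r0) := by
    have hfc : ContinuousOn f (Set.Icc (0:ℝ) r0) := by
      have : ∀ x ∈ Set.Icc (0:ℝ) r0, f x
          = (1 / (2 * α)) * (((1 + x) / (1 - x)) ^ α - 1) := fun x _ => hf x
      apply ContinuousOn.congr _ this
      apply ContinuousOn.mul continuousOn_const
      apply ContinuousOn.sub _ continuousOn_const
      apply ContinuousOn.rpow_const
      · apply ContinuousOn.div (by fun_prop) (by fun_prop)
        intro x hx
        have := hx.2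
        have : x < 1 := lt_of_le_of_lt hx.2 hr01
        intro h; linarith [sub_eq_zero.mp h]
      · intro x hx
        exact Or.inr hαpos.le
    have hmap : Set.MapsTo (fun r : ℝ => r ^ m) (Set.Icc 0 r0) (Set.Icc (0:ℝ) r0) := by
      intro x hx
      constructor
      · exact pow_nonneg hx.1 m
      · calc x ^ m ≤ r0 ^ m := pow_le_pow_left₀ hx.1 hx.2 m
        _ ≤ r0 ^ 1 := pow_le_pow_of_le_one hr0pos.le hr01.le hm
        _ = r0 := pow_one r0
    have h1 : ContinuousOn (fun r : ℝ => f (r ^ m)) (Set.Icc 0 r0) :=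
      hfc.comp (by fun_prop) hmap
    exact (continuousOn_const.mul h1).add (continuousOn_const.mul (hfc.comp
      (by fun_prop) (Set.mapsTo_id _)))
  -- existence via IVT
  have hmem : 1 / (2 * α) ∈ Set.Icc (g 0) (g r0) := ⟨by rw [hg0]; positivity, hgr0⟩
  obtain ⟨r, hrmem, hreq⟩ := intermediate_value_Icc hr0pos.le hcont hmem
  have hrpos : 0 < r := by
    rcases lt_or_eq_of_le hrmem.1 with h | h
    · exact h
    · exfalso; rw [← h] at hreq; rw [hg0] at hreq; linarith [hTpos, hreq]
  have hr1 : r < 1 := lt_of_le_of_lt hrmem.2 hr01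
  refine ⟨r, ⟨⟨hrpos, hr1⟩, ?_⟩, ?_⟩
  · simpa [hgdef, hcdef] using hreq
  · rintro y ⟨⟨hy0, hy1⟩, hyeq⟩
    have hyeq' : g y = 1 / (2 * α) := by simpa [hgdef, hcdef] using hyeq
    rcases lt_trichotomy y r with h | h | h
    · exfalso
      have := hgstrict y r hy0.le h hr1
      rw [hyeq', hreq] at this; linarith
    · exact h
    · exfalso
      have := hgstrict r y hrpos.le h hy1
      rw [hyeq', hreq] at this; linarith
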